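/- For all real q ≥ 2 and all real v with v ≥ M̄ ≥ √e, one has q·v^(q-1) - 2·v ≤ ((1 + 2·ln M̄)/M̄)·(q-2)·v^q. -/

import Mathlib

theorem q_rpow_sub_two_mul_le (q M v : ℝ) (hq : 2 ≤ q)
    (hM : Real.sqrt (Real.exp 1) ≤ M) (hv : M ≤ v) :
    q * v ^ (q - 1) - 2 * v ≤ ((1 + 2 * Real.log M) / M) * (q - 2) * v ^ q := by
  have he1 : (1:ℝ) ≤ Real.exp 1 := by linarith [Real.add_one_le_exp (1:ℝ)]
  have he : (1:ℝ) ≤ Real.sqrt (Real.exp 1) := by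
    nlinarith [Real.sq_sqrt (Real.exp_pos 1).le, Real.sqrt_nonneg (Real.exp 1)]
  have hM1 : 1 ≤ M := le_trans he hM
  have hv1 : 1 ≤ v := le_trans hM1 hv
  have hM0 : (0:ℝ) < M := by linarith
  have hv0 : (0:ℝ) < v := by linarith
  have hlogM : (1:ℝ)/2 ≤ Real.log M := by
    have := Real.log_le_log (Real.sqrt_pos.mpr (by positivity)) hM
    rwa [Real.log_sqrt (Real.exp_pos 1).le, Real.log_exp] at this
  have hvq1 : (0:ℝ) < v ^ (q-1) := Real.rpow_pos_of_pos hv0 _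
  set t := (q-2) * Real.log v with ht
  have ht0 : 0 ≤ t := mul_nonneg (by linarith) (Real.log_nonneg hv1)
  have hA : 1 - Real.exp (-t) ≤ t := by linarith [Real.add_one_le_exp (-t)]
  have hvv : v = v^(q-1) * Real.exp (-t) := by
    have : v^(q-1) * Real.exp (-t) = v ^ ((q-1) + (2-q)) := by
      rw [Real.rpow_add hv0, Real.rpow_def_of_pos hv0 (2-q)]
      ring_nf
      rw [ht]; ring_nf
    rw [this]
    norm_num
  have hq' : v^q = v^(q-1) * v := by
    rw [← Real.rpow_add_one hv0.ne' (q-1)]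
    ring_nf
  have key : q * v ^ (q-1) - 2 * v ≤ (1 + 2*Real.log v) * (q-2) * v ^ (q-1) := by
    have hcoef : q - 2 * Real.exp (-t) ≤ (1 + 2*Real.log v) * (q-2) := by
      have : (1 + 2*Real.log v) * (q-2) = (q-2) + 2*t := by rw [ht]; ring
      rw [this]; linarith
    calc q * v ^ (q-1) - 2 * v = (q - 2 * Real.exp (-t)) * v ^ (q-1) := by
          nth_rewrite 2 [hvv]; ring
      _ ≤ (1 + 2*Real.log v) * (q-2) * v ^ (q-1) :=
          mul_le_mul_of_nonneg_right hcoef hvq1.le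
  have hmono : M * (1 + 2*Real.log v) ≤ v * (1 + 2*Real.log M) := by
    have hr : Real.log v = Real.log M + Real.log (v/M) := by
      rw [Real.log_div hv0.ne' hM0.ne']; ring
    have hlr : Real.log (v/M) ≤ v/M - 1 := Real.log_le_sub_one_of_pos (by positivity)
    have h2 : M * Real.log (v/M) ≤ v - M := by
      have := mul_le_mul_of_nonneg_left hlr hM0.le
      rw [mul_sub, mul_div_cancel₀ _ hM0.ne'] at this
      linarith
    nlinarith [mul_nonneg (sub_nonneg.mpr hv) (by linarith : (0:ℝ) ≤ 2*Real.log M - 1)]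
  have step2 : (1 + 2*Real.log v) * (q-2) * v ^ (q-1)
      ≤ ((1 + 2 * Real.log M) / M) * (q - 2) * v ^ q := by
    rw [hq']
    have hc : (1 + 2*Real.log v) ≤ ((1 + 2 * Real.log M) / M) * v := by
      rw [div_mul_eq_mul_div, le_div_iff₀ hM0]
      nlinarith [hmono]
    have hnn : (0:ℝ) ≤ (q-2) * v^(q-1) := mul_nonneg (by linarith) hvq1.le
    nlinarith [mul_le_mul_of_nonneg_right hc hnn]
  linarith
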